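/- Let G = (V, E) be a connected graph on m vertices with maximum degree at most k (k ≥ 1). Then for every natural number l ≥ 1 there exist pairwise disjoint vertex sets V₁,…,V_t ⊆ V such that: (1) lk ≤ |V_i| ≤ lk² for every 1 ≤ i ≤ t; (2) |V₁| + ⋯ + |V_t| ≥ m − lk; and (3) the induced subgraph G[V_i] is connected for every 1 ≤ i ≤ t. -/

import Mathlib

open Finset

set_option linter.unusedSectionVars false

namespace ConnPartition

variable {V : Type*} [Fintype V] [DecidableEq V] (G : SimpleGraph V) [DecidableRel G.Adj]

def ReachIn (t : Finset V) (a b : V) : Prop :=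
  ∃ (ha : a ∈ (↑t : Set V)) (hb : b ∈ (↑t : Set V)),
    (G.induce (↑t : Set V)).Reachable ⟨a, ha⟩ ⟨b, hb⟩

variable {G}

lemma ReachIn.mem_left {t : Finset V} {a b : V} (h : ReachIn G t a b) : a ∈ t :=
  Finset.mem_coe.1 h.1

lemma ReachIn.mem_right {t : Finset V} {a b : V} (h : ReachIn G t a b) : b ∈ t :=
  Finset.mem_coe.1 h.2.1

lemma reachIn_refl {t : Finset V} {a : V} (ha : a ∈ t) : ReachIn G t a a :=
  ⟨Finset.mem_coe.2 ha, Finset.mem_coe.2 ha, SimpleGraph.Reachable.refl _⟩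

lemma ReachIn.symm {t : Finset V} {a b : V} (h : ReachIn G t a b) : ReachIn G t b a := by
  obtain ⟨ha, hb, hr⟩ := h
  exact ⟨hb, ha, hr.symm⟩

lemma ReachIn.trans {t : Finset V} {a b c : V} (h : ReachIn G t a b) (h' : ReachIn G t b c) :
    ReachIn G t a c := by
  obtain ⟨ha, hb, hr⟩ := h
  obtain ⟨hb', hc, hr'⟩ := h'
  exact ⟨ha, hc, hr.trans hr'⟩

def inclHom {t t' : Finset V} (h : t ⊆ t') :
    G.induce (↑t : Set V) →g G.induce (↑t' : Set V) where
  toFun x := ⟨x.1, Finset.mem_coe.2 (h (Finset.mem_coe.1 x.2))⟩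
  map_rel' := fun hab => hab

lemma ReachIn.mono {t t' : Finset V} (hsub : t ⊆ t') {a b : V} (h : ReachIn G t a b) :
    ReachIn G t' a b := by
  obtain ⟨ha, hb, hr⟩ := h
  exact ⟨Finset.mem_coe.2 (hsub (Finset.mem_coe.1 ha)),
    Finset.mem_coe.2 (hsub (Finset.mem_coe.1 hb)), hr.map (inclHom hsub)⟩

lemma reachIn_of_adj {t : Finset V} {a b : V} (ha : a ∈ t) (hb : b ∈ t) (hab : G.Adj a b) :
    ReachIn G t a b :=
  ⟨Finset.mem_coe.2 ha, Finset.mem_coe.2 hb, SimpleGraph.Adj.reachable hab⟩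

lemma reachIn_of_walk_support {t t' : Finset V} {a b : ↥(↑t : Set V)}
    (p : (G.induce (↑t : Set V)).Walk a b)
    (hsup : ∀ x ∈ p.support, (x : V) ∈ t') : ReachIn G t' ↑a ↑b := by
  induction p with
  | nil => exact reachIn_refl (hsup _ (SimpleGraph.Walk.start_mem_support _))
  | @cons u x w h q ih =>
    refine (reachIn_of_adj (hsup u (by simp)) (hsup x (by simp)) h).trans (ih ?_)
    intro y hy
    exact hsup y (by simp [hy])

lemma conn_of_reach {t : Finset V} {x₀ : V} (hx : x₀ ∈ t)
    (h : ∀ x ∈ t, ReachIn G t x x₀) : (G.induce (↑t : Set V)).Connected := by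
  rw [SimpleGraph.connected_iff]
  refine ⟨?_, ⟨⟨x₀, Finset.mem_coe.2 hx⟩⟩⟩
  intro a b
  obtain ⟨_, _, ra⟩ := h a.1 (Finset.mem_coe.1 a.2)
  obtain ⟨_, _, rb⟩ := h b.1 (Finset.mem_coe.1 b.2)
  exact ra.trans rb.symm

lemma reachIn_of_conn {t : Finset V} (h : (G.induce (↑t : Set V)).Connected)
    {a b : V} (ha : a ∈ t) (hb : b ∈ t) : ReachIn G t a b :=
  ⟨Finset.mem_coe.2 ha, Finset.mem_coe.2 hb, h.preconnected _ _⟩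

variable (G) in
/-- The connected component of `u` inside the finite vertex set `t`. -/
noncomputable def comp (t : Finset V) (u : V) : Finset V :=
  @Finset.filter _ (fun w => ReachIn G t u w) (Classical.decPred _) t

lemma mem_comp {t : Finset V} {u x : V} :
    x ∈ comp G t u ↔ x ∈ t ∧ ReachIn G t u x := by
  simp [comp, Finset.mem_filter]

lemma comp_subset {t : Finset V} {u : V} : comp G t u ⊆ t := fun _ hx => (mem_comp.1 hx).1

lemma reachIn_comp {t : Finset V} {u x : V} (h : ReachIn G t u x) :
    ReachIn G (comp G t u) u x := by
  obtain ⟨hu, hx, ⟨p⟩⟩ := h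
  refine reachIn_of_walk_support p ?_
  intro y hy
  exact mem_comp.2 ⟨Finset.mem_coe.1 y.2, ⟨hu, y.2, ⟨p.takeUntil y hy⟩⟩⟩

lemma conn_comp {t : Finset V} {u : V} (hu : u ∈ t) :
    (G.induce (↑(comp G t u) : Set V)).Connected := by
  refine conn_of_reach (mem_comp.2 ⟨hu, reachIn_refl hu⟩) ?_
  intro x hx
  exact (reachIn_comp (mem_comp.1 hx).2).symm

/-- From any vertex other than `r` in a connected set `s`, one can reach a neighbour of `r`
without going through `r`. -/
lemma exists_neighbor_reach {s : Finset V} {r : V} (hconn : (G.induce (↑s : Set V)).Connected)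
    (hr : r ∈ s) {w : V} (hw : w ∈ s) (hwr : w ≠ r) :
    ∃ u ∈ s, G.Adj r u ∧ ReachIn G (s.erase r) w u := by
  have hrc : r ∈ (↑s : Set V) := Finset.mem_coe.2 hr
  have key : ∀ (a b : ↥(↑s : Set V)) (p : (G.induce (↑s : Set V)).Walk a b),
      (b : V) = r → (a : V) ≠ r → ∃ u ∈ s, G.Adj r u ∧ ReachIn G (s.erase r) (a : V) u := by
    intro a b p
    induction p with
    | nil => intro hbr h; exact absurd hbr h
    | @cons a x c h q ih =>
      intro hbr har
      by_cases hx : (x : V) = r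
      · refine ⟨a, Finset.mem_coe.1 a.2, ?_,
          reachIn_refl (Finset.mem_erase.2 ⟨har, Finset.mem_coe.1 a.2⟩)⟩
        have hadj : G.Adj (a : V) (x : V) := h
        rw [hx] at hadj
        exact hadj.symm
      · obtain ⟨u, hus, hadj, hreach⟩ := ih hbr hx
        refine ⟨u, hus, hadj, ReachIn.trans ?_ hreach⟩
        exact reachIn_of_adj (Finset.mem_erase.2 ⟨har, Finset.mem_coe.1 a.2⟩)
          (Finset.mem_erase.2 ⟨hx, Finset.mem_coe.1 x.2⟩) h
  obtain ⟨p⟩ := hconn.preconnected ⟨w, Finset.mem_coe.2 hw⟩ ⟨r, hrc⟩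
  exact key _ _ p rfl hwr


lemma compl_connected {s P : Finset V} {r u : V}
    (hconn : (G.induce (↑s : Set V)).Connected) (hr : r ∈ s) (hus : u ∈ s)
    (hradj : G.Adj r u)
    (hPC : P ⊆ comp G (s.erase r) u)
    (hQ : ((comp G (s.erase r) u) \ P).Nonempty →
      (G.induce (↑((comp G (s.erase r) u) \ P) : Set V)).Connected ∧
        u ∈ comp G (s.erase r) u \ P) :
    (G.induce (↑(s \ P) : Set V)).Connected := by
  set C := comp G (s.erase r) u with hC
  have hCsub : C ⊆ s.erase r := comp_subset
  have hrP : r ∉ P := fun h => (Finset.mem_erase.1 (hCsub (hPC h))).1 rfl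
  have hrD : r ∈ s \ P := Finset.mem_sdiff.2 ⟨hr, hrP⟩
  refine conn_of_reach hrD ?_
  intro w hw
  obtain ⟨hws, hwP⟩ := Finset.mem_sdiff.1 hw
  by_cases hwr : w = r
  · subst hwr; exact reachIn_refl hrD
  have hwe : w ∈ s.erase r := Finset.mem_erase.2 ⟨hwr, hws⟩
  by_cases hwC : w ∈ C
  · obtain ⟨hcp, huCP⟩ := hQ ⟨w, Finset.mem_sdiff.2 ⟨hwC, hwP⟩⟩
    have h1 : ReachIn G (C \ P) w u :=
      reachIn_of_conn hcp (Finset.mem_sdiff.2 ⟨hwC, hwP⟩) huCP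
    have hsub : C \ P ⊆ s \ P := by
      intro x hx
      obtain ⟨hx1, hx2⟩ := Finset.mem_sdiff.1 hx
      exact Finset.mem_sdiff.2 ⟨Finset.mem_of_mem_erase (hCsub hx1), hx2⟩
    exact (h1.mono hsub).trans (reachIn_of_adj (hsub huCP) hrD hradj.symm)
  · obtain ⟨u', hu's, hadj', hreach⟩ := exists_neighbor_reach hconn hr hws hwr
    have hdisj : ∀ x ∈ comp G (s.erase r) w, x ∉ P := by
      intro x hx hxP
      obtain ⟨hxe, hwx⟩ := mem_comp.1 hx
      have hux : ReachIn G (s.erase r) u x := (mem_comp.1 (hPC hxP)).2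
      exact hwC (mem_comp.2 ⟨hwe, hux.trans hwx.symm⟩)
    have hsub : comp G (s.erase r) w ⊆ s \ P := fun x hx =>
      Finset.mem_sdiff.2 ⟨Finset.mem_of_mem_erase (comp_subset hx), hdisj x hx⟩
    have h1 : ReachIn G (comp G (s.erase r) w) w u' := reachIn_comp hreach
    have hu'mem : u' ∈ comp G (s.erase r) w := h1.mem_right
    exact (h1.mono hsub).trans (reachIn_of_adj (hsub hu'mem) hrD hadj'.symm)

lemma cut_lemma {k l : ℕ} (hk : 1 ≤ k) (hl : 1 ≤ l) (hdeg : ∀ v, G.degree v ≤ k) :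
    ∀ (n : ℕ) (s : Finset V), s.card ≤ n → (G.induce (↑s : Set V)).Connected →
    ∀ r ∈ s,
      s.card ≤ l * k ^ 2 ∨
      ∃ P ⊆ s.erase r, l * k ≤ P.card ∧ P.card ≤ l * k ^ 2 ∧
        (G.induce (↑P : Set V)).Connected ∧ (G.induce (↑(s \ P) : Set V)).Connected := by
  intro n
  induction n with
  | zero =>
    intro s hcard _ r _
    left
    simp [Finset.card_eq_zero.1 (Nat.le_zero.1 hcard)]
  | succ m ih =>
    intro s hcard hconn r hr
    set N := (G.neighborFinset r) ∩ s with hN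
    by_cases hheavy : ∃ u ∈ N, l * k ≤ (comp G (s.erase r) u).card
    · obtain ⟨u, huN, hbig⟩ := hheavy
      obtain ⟨hunbr, hus⟩ := Finset.mem_inter.1 huN
      have hadj : G.Adj r u := (SimpleGraph.mem_neighborFinset G r u).1 hunbr
      have hur : u ≠ r := fun h => G.irrefl (h ▸ hadj)
      have hue : u ∈ s.erase r := Finset.mem_erase.2 ⟨hur, hus⟩
      set C := comp G (s.erase r) u with hC
      have huC : u ∈ C := mem_comp.2 ⟨hue, reachIn_refl hue⟩
      have hCcard : C.card ≤ m := by
        have h1 : C.card ≤ (s.erase r).card := Finset.card_le_card comp_subset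
        have h2 : (s.erase r).card = s.card - 1 := Finset.card_erase_of_mem hr
        omega
      have hCconn := conn_comp (G := G) hue
      rcases ih C hCcard hCconn u huC with hsmall | ⟨P, hPsub, h1, h2, hconnP, hconnCP⟩
      · right
        refine ⟨C, comp_subset, hbig, hsmall, hCconn, ?_⟩
        refine compl_connected hconn hr hus hadj (subset_refl C) ?_
        intro hne
        simp [hC] at hne
      · right
        have hPC : P ⊆ C := hPsub.trans (Finset.erase_subset _ _)
        refine ⟨P, hPC.trans comp_subset, h1, h2, hconnP, ?_⟩
        refine compl_connected hconn hr hus hadj hPC ?_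
        intro _
        exact ⟨hconnCP, Finset.mem_sdiff.2 ⟨huC,
          fun huP => (Finset.mem_erase.1 (hPsub huP)).1 rfl⟩⟩
    · left
      push_neg at hheavy
      have hcover : s.erase r ⊆ N.biUnion (fun u => comp G (s.erase r) u) := by
        intro w hw
        obtain ⟨hwr, hws⟩ := Finset.mem_erase.1 hw
        obtain ⟨u, hus, hadj, hreach⟩ := exists_neighbor_reach hconn hr hws hwr
        refine Finset.mem_biUnion.2 ⟨u, Finset.mem_inter.2
          ⟨(SimpleGraph.mem_neighborFinset G r u).2 hadj, hus⟩, ?_⟩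
        exact mem_comp.2 ⟨hreach.mem_left, hreach.symm⟩
      have hlk : 1 ≤ l * k := by
        calc 1 = 1 * 1 := by ring
        _ ≤ l * k := Nat.mul_le_mul hl hk
      have hsmall' : ∀ u ∈ N, (comp G (s.erase r) u).card ≤ l * k - 1 := by
        intro u hu
        have := hheavy u hu
        omega
      have h1 : (s.erase r).card ≤ ∑ u ∈ N, (comp G (s.erase r) u).card :=
        le_trans (Finset.card_le_card hcover) (Finset.card_biUnion_le)
      have h2 : ∑ u ∈ N, (comp G (s.erase r) u).card ≤ N.card * (l * k - 1) := by
        simpa using Finset.sum_le_card_nsmul N _ _ hsmall'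
      have hNk : N.card ≤ k := by
        have : N.card ≤ (G.neighborFinset r).card :=
          Finset.card_le_card Finset.inter_subset_left
        rw [SimpleGraph.card_neighborFinset_eq_degree] at this
        exact this.trans (hdeg r)
      have herase : (s.erase r).card = s.card - 1 := Finset.card_erase_of_mem hr
      have hpos : 1 ≤ s.card := Finset.card_pos.2 ⟨r, hr⟩
      have hfin : s.card ≤ k * (l * k - 1) + 1 := by
        have := le_trans h1 (le_trans h2 (Nat.mul_le_mul_right _ hNk))
        omega
      have : k * (l * k - 1) + 1 ≤ l * k ^ 2 := by
        have hexp : l * k ^ 2 = (l * k) * k := by ring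
        obtain ⟨a, ha⟩ : ∃ a, l * k = a + 1 := ⟨l * k - 1, by omega⟩
        rw [hexp, ha]
        have : a + 1 - 1 = a := by omega
        rw [this]
        calc k * a + 1 ≤ a * k + k := by
              have : 1 ≤ k := hk
              nlinarith
        _ = (a + 1) * k := by ring
      omega


lemma partition_lemma {k l : ℕ} (hk : 1 ≤ k) (hl : 1 ≤ l) (hdeg : ∀ v, G.degree v ≤ k) :
    ∀ (n : ℕ) (s : Finset V), s.card ≤ n → (G.induce (↑s : Set V)).Connected →
    ∃ (t : ℕ) (Vs : Fin t → Finset V),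
      (∀ i, Vs i ⊆ s) ∧
      (∀ i j, i ≠ j → Disjoint (Vs i) (Vs j)) ∧
      (∀ i, l * k ≤ (Vs i).card ∧ (Vs i).card ≤ l * k ^ 2) ∧
      s.card ≤ (∑ i, (Vs i).card) + l * k ∧
      ∀ i, (G.induce (↑(Vs i) : Set V)).Connected := by
  intro n
  induction n with
  | zero =>
    intro s hcard _
    refine ⟨0, Fin.elim0, fun i => i.elim0, fun i => i.elim0, fun i => i.elim0, ?_, fun i => i.elim0⟩
    simp only [Finset.sum_empty, Fin.sum_univ_zero]
    omega
  | succ m ih =>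
    intro s hcard hconn
    by_cases hsmall : s.card ≤ l * k
    · refine ⟨0, Fin.elim0, fun i => i.elim0, fun i => i.elim0, fun i => i.elim0, ?_, fun i => i.elim0⟩
      simp only [Fin.sum_univ_zero]
      omega
    · push_neg at hsmall
      have hne : s.Nonempty := Finset.card_pos.1 (by omega)
      obtain ⟨r, hr⟩ := hne
      rcases cut_lemma hk hl hdeg (m + 1) s hcard hconn r hr with
        hle | ⟨P, hPsub, hP1, hP2, hPconn, hDconn⟩
      · refine ⟨1, fun _ => s, fun _ => subset_refl s, ?_, ?_, ?_, fun _ => hconn⟩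
        · intro i j hij
          exact absurd (Subsingleton.elim i j) hij
        · exact fun _ => ⟨hsmall.le, hle⟩
        · simp
      · have hPs : P ⊆ s := hPsub.trans (Finset.erase_subset _ _)
        have hlk : 1 ≤ l * k := by
          calc 1 = 1 * 1 := by ring
          _ ≤ l * k := Nat.mul_le_mul hl hk
        have hDeq : (s \ P).card + P.card = s.card := Finset.card_sdiff_add_card_eq_card hPs
        have hDcard : (s \ P).card ≤ m := by omega
        obtain ⟨t, Vs, hsub, hdisj, hsize, hcount, hconn'⟩ := ih (s \ P) hDcard hDconn
        have key : ∀ i, Disjoint P (Vs i) := fun i => Finset.disjoint_left.2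
          (fun x hxP hxV => (Finset.mem_sdiff.1 (hsub i hxV)).2 hxP)
        refine ⟨t + 1, Fin.cons P Vs, ?_, ?_, ?_, ?_, ?_⟩
        · intro i
          induction i using Fin.cases with
          | zero => simpa using hPs
          | succ i' => simpa using (hsub i').trans (Finset.sdiff_subset)
        · intro i j hij
          induction i using Fin.cases with
          | zero =>
            induction j using Fin.cases with
            | zero => exact absurd rfl hij
            | succ j' => simpa using key j'
          | succ i' =>
            induction j using Fin.cases with
            | zero => simpa using (key i').symm
            | succ j' =>
              have : i' ≠ j' := fun h => hij (by rw [h])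
              simpa using hdisj i' j' this
        · intro i
          induction i using Fin.cases with
          | zero => simpa using ⟨hP1, hP2⟩
          | succ i' => simpa using hsize i'
        · rw [Fin.sum_univ_succ]
          simp only [Fin.cons_zero, Fin.cons_succ]
          omega
        · intro i
          induction i using Fin.cases with
          | zero => rw [Fin.cons_zero]; exact hPconn
          | succ i' => rw [Fin.cons_succ]; exact hconn' i'

end ConnPartition

open Finset

/-- Every connected graph on `m` vertices with maximum degree at most `k` can,
for every `l ≥ 1`, be partitioned into disjoint connected pieces `V₁, …, V_t`,
each of size between `l·k` and `l·k²`, covering all but at most `l·k`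
vertices. -/
theorem connected_partition_into_connected_pieces {V : Type*} [Fintype V]
    [DecidableEq V] (G : SimpleGraph V) [DecidableRel G.Adj]
    (k : ℕ) (hk : 1 ≤ k) (hconn : G.Connected) (hdeg : G.maxDegree ≤ k)
    (l : ℕ) (hl : 1 ≤ l) :
    ∃ (t : ℕ) (Vs : Fin t → Finset V),
      (∀ i j, i ≠ j → Disjoint (Vs i) (Vs j)) ∧
      (∀ i, l * k ≤ (Vs i).card ∧ (Vs i).card ≤ l * k ^ 2) ∧
      Fintype.card V ≤ (∑ i, (Vs i).card) + l * k ∧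
      ∀ i, (G.induce (↑(Vs i) : Set V)).Connected := by
  have hconn' : (G.induce (↑(univ : Finset V) : Set V)).Connected := by
    have h : (↑(univ : Finset V) : Set V) = Set.univ := by simp
    rw [h]
    exact ((SimpleGraph.induceUnivIso G).connected_iff).2 hconn
  obtain ⟨t, Vs, _, hdisj, hsize, hcount, hc⟩ :=
    ConnPartition.partition_lemma hk hl (fun v => (G.degree_le_maxDegree v).trans hdeg)
      (Fintype.card V) univ (by rw [card_univ]) hconn'
  exact ⟨t, Vs, hdisj, hsize, by simpa [card_univ] using hcount, hc⟩
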